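/- arXiv:1204.0243 — 3 statements merged into one kernel-verified Lean document; each statement's English description precedes it below -/
import Mathlib

section
/- Let g₁, g₂ : Ω → 𝔻 be nowhere-holomorphic C² functions on an open set Ω ⊆ ℂ satisfying the compatibility condition (CP). Then condition (Ge1) holds on Ω if and only if condition (Ge2) holds on Ω. -/
open Complex ComplexConjugate

/-- Wirtinger derivative `∂h/∂z = ½(∂h/∂u − i ∂h/∂v)` of a map `h : ℂ → ℂ`. -/
noncomputable def wz (h : ℂ → ℂ) (z : ℂ) : ℂ :=
  (1 / 2) * (fderiv ℝ h z 1 - Complex.I * fderiv ℝ h z Complex.I)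

/-- Wirtinger derivative `∂h/∂z̄ = ½(∂h/∂u + i ∂h/∂v)` of a map `h : ℂ → ℂ`. -/
noncomputable def wzb (h : ℂ → ℂ) (z : ℂ) : ℂ :=
  (1 / 2) * (fderiv ℝ h z 1 + Complex.I * fderiv ℝ h z Complex.I)

/-- Wirtinger derivative `∂x/∂z` of a real-valued map `x : ℂ → ℝ`. -/
noncomputable def wzR (x : ℂ → ℝ) (z : ℂ) : ℂ :=
  (1 / 2) * (((fderiv ℝ x z 1 : ℝ) : ℂ) - Complex.I * ((fderiv ℝ x z Complex.I : ℝ) : ℂ))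

/-- The function `F` appearing in the compatibility condition (CP). -/
noncomputable def Ffun (g₁ g₂ : ℂ → ℂ) (z : ℂ) : ℂ :=
  wzb g₁ z / ((1 - g₁ z * conj (g₂ z)) * (1 + (Complex.normSq (g₁ z) : ℂ)))

/-- The compatibility condition (CP) at a point `z`. -/
def CP (g₁ g₂ : ℂ → ℂ) (z : ℂ) : Prop :=
  Ffun g₁ g₂ z = wzb g₂ z / ((1 - conj (g₁ z) * g₂ z) * (1 + (Complex.normSq (g₂ z) : ℂ)))

/-- The integrability condition (Ge1) at a point `z`. -/
def Ge1 (g₁ g₂ : ℂ → ℂ) (z : ℂ) : Prop :=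
  0 = wz (wzb g₁) z
      + (conj (g₂ z) / (1 - g₁ z * conj (g₂ z))
          - conj (g₁ z) / (1 + (Complex.normSq (g₁ z) : ℂ))) * wz g₁ z * wzb g₁ z
      + ((g₁ z + g₂ z) / ((1 - conj (g₁ z) * g₂ z) * (1 + (Complex.normSq (g₁ z) : ℂ))))
          * (Complex.normSq (wzb g₁ z) : ℂ)

/-- The integrability condition (Ge2) at a point `z`. -/
def Ge2 (g₁ g₂ : ℂ → ℂ) (z : ℂ) : Prop :=
  0 = wz (wzb g₂) z
      + (conj (g₁ z) / (1 - conj (g₁ z) * g₂ z)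
          - conj (g₂ z) / (1 + (Complex.normSq (g₂ z) : ℂ))) * wz g₂ z * wzb g₂ z
      + ((g₁ z + g₂ z) / ((1 - g₁ z * conj (g₂ z)) * (1 + (Complex.normSq (g₂ z) : ℂ))))
          * (Complex.normSq (wzb g₂ z) : ℂ)


set_option maxHeartbeats 1000000 in
lemma keyalg0 (u1 u2 w1 w2 a1 a2 b1 b2 e1 e2 c1 c2 B Bb C D : ℂ)
    (hB : B ≠ 0) (hBb : Bb ≠ 0) (hC : C ≠ 0) (hD : D ≠ 0)
    (hrel : u1 * Bb + u2 * C = u1 * D + u2 * B)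
    (hcp : b1 * (Bb * D) = b2 * (B * C))
    (hcp' : e1 * (B * D) = e2 * (Bb * C))
    (hH : c1 * (Bb * D) - b1 * (e1 * u2 + w1 * a2) * D + b1 * Bb * (a2 * w2 + u2 * e2)
      = c2 * (B * C) - b2 * (a1 * w2 + u1 * e2) * C + b2 * B * (a1 * w1 + u1 * e1)) :
    (0 = c1 + (w2 / B - w1 / C) * a1 * b1 + (u1 + u2) / (Bb * C) * (b1 * e1))
    ↔ (0 = c2 + (w1 / Bb - w2 / D) * a2 * b2 + (u1 + u2) / (B * D) * (b2 * e2)) := by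
  have hBBbCD : B * Bb * C * D ≠ 0 :=
    mul_ne_zero (mul_ne_zero (mul_ne_zero hB hBb) hC) hD
  have ex1 : (c1 + (w2 / B - w1 / C) * a1 * b1 + (u1 + u2) / (Bb * C) * (b1 * e1))
      * (B * Bb * C * D)
      = c1 * (B * Bb * C * D) + (w2 * C - w1 * B) * (a1 * b1) * (Bb * D)
        + (u1 + u2) * (b1 * e1) * (B * D) := by
    field_simp
  have ex2 : (c2 + (w1 / Bb - w2 / D) * a2 * b2 + (u1 + u2) / (B * D) * (b2 * e2))
      * (B * Bb * C * D)
      = c2 * (B * Bb * C * D) + a2 * b2 * (w1 * D - w2 * Bb) * (B * C)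
        + (u1 + u2) * (b2 * e2) * (Bb * C) := by
    field_simp
  have step : (c1 * (B * Bb * C * D) + (w2 * C - w1 * B) * (a1 * b1) * (Bb * D)
        + (u1 + u2) * (b1 * e1) * (B * D) = 0)
      ↔ (c2 * (B * Bb * C * D) + a2 * b2 * (w1 * D - w2 * Bb) * (B * C)
        + (u1 + u2) * (b2 * e2) * (Bb * C) = 0) := by
    constructor
    · intro h1
      have h2 : (c2 * (B * Bb * C * D) + a2 * b2 * (w1 * D - w2 * Bb) * (B * C)
          + (u1 + u2) * (b2 * e2) * (Bb * C)) * (B * C * (B * C * Bb * C)) = 0 := by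
        linear_combination (Bb * D * (B * C * Bb * C)) * h1
          - (B * Bb * C * D * (B * C * Bb * C)) * hH
          + (((-(a2 * (w1 * D - w2 * Bb) * B * B * C * C)
                - B * Bb * C * D * (a1 * w2 * C - B * (a1 * w1 + u1 * e1)))
              + (-(B * Bb * C * C * ((u1 + u2) + u1 * D))) * e2) * (Bb * C)) * hcp
          + ((-(B * Bb * Bb * C * D * (b1 * u2))) * (B * C)
              + (-(B * Bb * C * C * ((u1 + u2) + u1 * D))) * (b1 * (Bb * D))) * hcp'
          - (b1 * e1 * B^2 * Bb^2 * C^2 * D^2) * hrel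
      rcases mul_eq_zero.mp h2 with h' | h'
      · exact h'
      · exact absurd h' (mul_ne_zero (mul_ne_zero hB hC)
          (mul_ne_zero (mul_ne_zero (mul_ne_zero hB hC) hBb) hC))
    · intro h2
      have h1 : (c1 * (B * Bb * C * D) + (w2 * C - w1 * B) * (a1 * b1) * (Bb * D)
          + (u1 + u2) * (b1 * e1) * (B * D)) * (Bb * D * (B * C * Bb * C)) = 0 := by
        linear_combination (B * C * (B * C * Bb * C)) * h2
          + (B * Bb * C * D * (B * C * Bb * C)) * hH
          - (((-(a2 * (w1 * D - w2 * Bb) * B * B * C * C)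
                - B * Bb * C * D * (a1 * w2 * C - B * (a1 * w1 + u1 * e1)))
              + (-(B * Bb * C * C * ((u1 + u2) + u1 * D))) * e2) * (Bb * C)) * hcp
          - ((-(B * Bb * Bb * C * D * (b1 * u2))) * (B * C)
              + (-(B * Bb * C * C * ((u1 + u2) + u1 * D))) * (b1 * (Bb * D))) * hcp'
          + (b1 * e1 * B^2 * Bb^2 * C^2 * D^2) * hrel
      rcases mul_eq_zero.mp h1 with h' | h'
      · exact h'
      · exact absurd h' (mul_ne_zero (mul_ne_zero hBb hD)
          (mul_ne_zero (mul_ne_zero (mul_ne_zero hB hC) hBb) hC))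
  constructor
  · intro h
    have hp1 : c1 * (B * Bb * C * D) + (w2 * C - w1 * B) * (a1 * b1) * (Bb * D)
        + (u1 + u2) * (b1 * e1) * (B * D) = 0 := by rw [← ex1, ← h, zero_mul]
    have hp2 := step.mp hp1
    rw [hp2] at ex2
    rcases mul_eq_zero.mp ex2 with h' | h'
    · exact h'.symm
    · exact absurd h' hBBbCD
  · intro h
    have hp2 : c2 * (B * Bb * C * D) + a2 * b2 * (w1 * D - w2 * Bb) * (B * C)
        + (u1 + u2) * (b2 * e2) * (Bb * C) = 0 := by rw [← ex2, ← h, zero_mul]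
    have hp1 := step.mpr hp2
    rw [hp1] at ex1
    rcases mul_eq_zero.mp ex1 with h' | h'
    · exact h'.symm
    · exact absurd h' hBBbCD

def HasW (f : ℂ → ℂ) (z a b : ℂ) : Prop :=
  DifferentiableAt ℝ f z ∧ wz f z = a ∧ wzb f z = b

lemma hasW_const (z c : ℂ) : HasW (fun _ => c) z 0 0 := by
  refine ⟨differentiableAt_const c, ?_, ?_⟩ <;> simp [wz, wzb]

lemma HasW.mul {f g : ℂ → ℂ} {z a b a' b' : ℂ} (hf : HasW f z a b) (hg : HasW g z a' b') :
    HasW (fun y => f y * g y) z (a * g z + f z * a') (b * g z + f z * b') := by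
  obtain ⟨hfd, ha, hb⟩ := hf
  obtain ⟨hgd, ha', hb'⟩ := hg
  subst ha hb ha' hb'
  refine ⟨hfd.mul hgd, ?_, ?_⟩ <;>
  · simp only [wz, wzb, fderiv_fun_mul hfd hgd, ContinuousLinearMap.add_apply,
      ContinuousLinearMap.smul_apply, smul_eq_mul]
    ring

lemma HasW.add {f g : ℂ → ℂ} {z a b a' b' : ℂ} (hf : HasW f z a b) (hg : HasW g z a' b') :
    HasW (fun y => f y + g y) z (a + a') (b + b') := by
  obtain ⟨hfd, ha, hb⟩ := hf
  obtain ⟨hgd, ha', hb'⟩ := hg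
  subst ha hb ha' hb'
  refine ⟨hfd.add hgd, ?_, ?_⟩ <;>
  · simp only [wz, wzb, fderiv_fun_add hfd hgd, ContinuousLinearMap.add_apply]
    ring

lemma HasW.sub {f g : ℂ → ℂ} {z a b a' b' : ℂ} (hf : HasW f z a b) (hg : HasW g z a' b') :
    HasW (fun y => f y - g y) z (a - a') (b - b') := by
  obtain ⟨hfd, ha, hb⟩ := hf
  obtain ⟨hgd, ha', hb'⟩ := hg
  subst ha hb ha' hb'
  refine ⟨hfd.sub hgd, ?_, ?_⟩ <;>
  · simp only [wz, wzb, fderiv_fun_sub hfd hgd, ContinuousLinearMap.sub_apply]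
    ring

lemma HasW.conj' {f : ℂ → ℂ} {z a b : ℂ} (hf : HasW f z a b) :
    HasW (fun y => conj (f y)) z (conj b) (conj a) := by
  obtain ⟨hfd, ha, hb⟩ := hf
  subst ha hb
  have hfun : (fun y => conj (f y)) = (⇑Complex.conjCLE ∘ f) := by
    funext y; simp [Complex.conjCLE_apply]
  have hdiff : DifferentiableAt ℝ (fun y => conj (f y)) z := by
    rw [hfun]; exact Complex.conjCLE.differentiableAt.comp z hfd
  have hfd' : fderiv ℝ (fun y => conj (f y)) z
      = (Complex.conjCLE : ℂ →L[ℝ] ℂ).comp (fderiv ℝ f z) := by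
    rw [hfun, Complex.conjCLE.comp_fderiv]
  refine ⟨hdiff, ?_, ?_⟩ <;>
  · simp only [wz, wzb, hfd', ContinuousLinearMap.comp_apply,
      ContinuousLinearEquiv.coe_coe, Complex.conjCLE_apply]
    simp only [map_mul, map_add, map_sub, map_div₀, map_one, map_ofNat, Complex.conj_I]
    ring

lemma hasW_self {f : ℂ → ℂ} {z : ℂ} (hd : DifferentiableAt ℝ f z) :
    HasW f z (wz f z) (wzb f z) := ⟨hd, rfl, rfl⟩

lemma diff_wzb {g : ℂ → ℂ} {z : ℂ} (hc : ContDiffAt ℝ 2 g z) :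
    DifferentiableAt ℝ (wzb g) z := by
  have h1 : ContDiffAt ℝ 1 (fderiv ℝ g) z := hc.fderiv_right (by norm_num)
  have h2 : DifferentiableAt ℝ (fun y => fderiv ℝ g y 1) z :=
    (h1.clm_apply contDiffAt_const).differentiableAt one_ne_zero
  have h3 : DifferentiableAt ℝ (fun y => fderiv ℝ g y Complex.I) z :=
    (h1.clm_apply contDiffAt_const).differentiableAt one_ne_zero
  have he : wzb g = fun y =>
      (1/2 : ℂ) * (fderiv ℝ g y 1 + Complex.I * fderiv ℝ g y Complex.I) := rfl
  rw [he]
  exact (differentiableAt_const _).mul (h2.add ((differentiableAt_const _).mul h3))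

lemma one_add_mul_conj_ne (w : ℂ) : (1 : ℂ) + w * conj w ≠ 0 := by
  rw [Complex.mul_conj]
  intro h
  have hre := congrArg Complex.re h
  simp [Complex.add_re, Complex.one_re, Complex.ofReal_re, Complex.zero_re] at hre
  nlinarith [Complex.normSq_nonneg w]

lemma one_add_normSq_ne (w : ℂ) : (1 : ℂ) + (Complex.normSq w : ℂ) ≠ 0 := by
  rw [← Complex.mul_conj]
  exact one_add_mul_conj_ne w

lemma one_sub_mul_conj_ne {x y : ℂ} (h1 : ‖x‖ < 1) (h2 : ‖y‖ < 1) :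
    (1 : ℂ) - x * conj y ≠ 0 := by
  intro h
  have h3 : (1 : ℂ) = x * conj y := sub_eq_zero.mp h
  have h4 := congrArg (‖·‖) h3
  simp only [norm_one, norm_mul, Complex.norm_conj] at h4
  nlinarith [norm_nonneg x, norm_nonneg y]

lemma one_sub_conj_mul_ne {x y : ℂ} (h1 : ‖x‖ < 1) (h2 : ‖y‖ < 1) :
    (1 : ℂ) - conj x * y ≠ 0 := by
  intro h
  have h3 : (1 : ℂ) = conj x * y := sub_eq_zero.mp h
  have h4 := congrArg (‖·‖) h3
  simp only [norm_one, norm_mul, Complex.norm_conj] at h4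
  nlinarith [norm_nonneg x, norm_nonneg y]

/-- **(Theorem, part (a)).** For nowhere-holomorphic `C²` maps `g₁, g₂ : Ω → 𝔻`
satisfying the compatibility condition (CP), the integrability condition (Ge1) holds
on `Ω` if and only if (Ge2) holds on `Ω`. -/

theorem Ge1_iff_Ge2
    (Ω : Set ℂ) (hΩ : IsOpen Ω) (g₁ g₂ : ℂ → ℂ)
    (hg₁ : ContDiffOn ℝ 2 g₁ Ω) (hg₂ : ContDiffOn ℝ 2 g₂ Ω)
    (hd₁ : ∀ z ∈ Ω, ‖g₁ z‖ < 1) (hd₂ : ∀ z ∈ Ω, ‖g₂ z‖ < 1)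
    (hnh₁ : ∀ z ∈ Ω, wzb g₁ z ≠ 0) (hnh₂ : ∀ z ∈ Ω, wzb g₂ z ≠ 0)
    (hCP : ∀ z ∈ Ω, CP g₁ g₂ z) :
    (∀ z ∈ Ω, Ge1 g₁ g₂ z) ↔ (∀ z ∈ Ω, Ge2 g₁ g₂ z) := by
  have main : ∀ z ∈ Ω, (Ge1 g₁ g₂ z ↔ Ge2 g₁ g₂ z) := by
    intro z hz
    have hmem := hΩ.mem_nhds hz
    have hc1 : ContDiffAt ℝ 2 g₁ z := hg₁.contDiffAt hmem
    have hc2 : ContDiffAt ℝ 2 g₂ z := hg₂.contDiffAt hmem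
    have d1 : DifferentiableAt ℝ g₁ z := hc1.differentiableAt two_ne_zero
    have d2 : DifferentiableAt ℝ g₂ z := hc2.differentiableAt two_ne_zero
    have dA : DifferentiableAt ℝ (wzb g₁) z := diff_wzb hc1
    have dB : DifferentiableAt ℝ (wzb g₂) z := diff_wzb hc2
    have W1 := hasW_self d1
    have W2 := hasW_self d2
    have WA := hasW_self dA
    have WB := hasW_self dB
    -- nonvanishing denominators at z
    have hB : (1 : ℂ) - g₁ z * conj (g₂ z) ≠ 0 := one_sub_mul_conj_ne (hd₁ z hz) (hd₂ z hz)
    have hBb : (1 : ℂ) - conj (g₁ z) * g₂ z ≠ 0 := one_sub_conj_mul_ne (hd₁ z hz) (hd₂ z hz)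
    have hC : (1 : ℂ) + g₁ z * conj (g₁ z) ≠ 0 := one_add_mul_conj_ne (g₁ z)
    have hD : (1 : ℂ) + g₂ z * conj (g₂ z) ≠ 0 := one_add_mul_conj_ne (g₂ z)
    -- the cross-multiplied compatibility condition, on all of Ω
    have hcross : ∀ y ∈ Ω,
        wzb g₁ y * ((1 - conj (g₁ y) * g₂ y) * (1 + g₂ y * conj (g₂ y)))
          = wzb g₂ y * ((1 - g₁ y * conj (g₂ y)) * (1 + g₁ y * conj (g₁ y))) := by
      intro y hy
      have hcp := hCP y hy
      unfold CP Ffun at hcp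
      rw [div_eq_div_iff
          (mul_ne_zero (one_sub_mul_conj_ne (hd₁ y hy) (hd₂ y hy)) (one_add_normSq_ne (g₁ y)))
          (mul_ne_zero (one_sub_conj_mul_ne (hd₁ y hy) (hd₂ y hy)) (one_add_normSq_ne (g₂ y)))]
        at hcp
      simp only [← Complex.mul_conj] at hcp
      linear_combination hcp
    -- differentiate the identity P = Q on Ω
    have hPQ : Set.EqOn
        (fun y => wzb g₁ y * (1 - conj (g₁ y) * g₂ y) * (1 + g₂ y * conj (g₂ y)))
        (fun y => wzb g₂ y * (1 - g₁ y * conj (g₂ y)) * (1 + g₁ y * conj (g₁ y))) Ω := by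
      intro y hy
      have := hcross y hy
      simp only []
      linear_combination this
    have hfd : fderiv ℝ
          (fun y => wzb g₁ y * (1 - conj (g₁ y) * g₂ y) * (1 + g₂ y * conj (g₂ y))) z
        = fderiv ℝ
          (fun y => wzb g₂ y * (1 - g₁ y * conj (g₂ y)) * (1 + g₁ y * conj (g₁ y))) z :=
      Filter.EventuallyEq.fderiv_eq (Filter.eventuallyEq_of_mem hmem hPQ)
    have hwzPQ : wz
          (fun y => wzb g₁ y * (1 - conj (g₁ y) * g₂ y) * (1 + g₂ y * conj (g₂ y))) z
        = wz
          (fun y => wzb g₂ y * (1 - g₁ y * conj (g₂ y)) * (1 + g₁ y * conj (g₁ y))) z := by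
      unfold wz
      rw [hfd]
    -- compute the two Wirtinger z-derivatives
    have WP := (WA.mul ((hasW_const z 1).sub (W1.conj'.mul W2))).mul
      ((hasW_const z 1).add (W2.mul W2.conj'))
    have WQ := (WB.mul ((hasW_const z 1).sub (W1.mul W2.conj'))).mul
      ((hasW_const z 1).add (W1.mul W1.conj'))
    have hwzP := WP.2.1
    have hwzQ := WQ.2.1
    beta_reduce at hwzP hwzQ
    -- the differentiated identity in canonical form
    have hH : wz (wzb g₁) z * ((1 - conj (g₁ z) * g₂ z) * (1 + g₂ z * conj (g₂ z)))
          - wzb g₁ z * (conj (wzb g₁ z) * g₂ z + conj (g₁ z) * wz g₂ z)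
            * (1 + g₂ z * conj (g₂ z))
          + wzb g₁ z * (1 - conj (g₁ z) * g₂ z)
            * (wz g₂ z * conj (g₂ z) + g₂ z * conj (wzb g₂ z))
        = wz (wzb g₂) z * ((1 - g₁ z * conj (g₂ z)) * (1 + g₁ z * conj (g₁ z)))
          - wzb g₂ z * (wz g₁ z * conj (g₂ z) + g₁ z * conj (wzb g₂ z))
            * (1 + g₁ z * conj (g₁ z))
          + wzb g₂ z * (1 - g₁ z * conj (g₂ z))
            * (wz g₁ z * conj (g₁ z) + g₁ z * conj (wzb g₁ z)) := by
      linear_combination hwzQ - hwzP + hwzPQ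
    have hcpz := hcross z hz
    have hcp' : conj (wzb g₁ z) * ((1 - g₁ z * conj (g₂ z)) * (1 + g₂ z * conj (g₂ z)))
        = conj (wzb g₂ z) * ((1 - conj (g₁ z) * g₂ z) * (1 + g₁ z * conj (g₁ z))) := by
      have h := congrArg (starRingEnd ℂ) hcpz
      simp only [map_mul, map_sub, map_add, map_one, Complex.conj_conj] at h
      linear_combination h
    have hrel : g₁ z * (1 - conj (g₁ z) * g₂ z) + g₂ z * (1 + g₁ z * conj (g₁ z))
        = g₁ z * (1 + g₂ z * conj (g₂ z)) + g₂ z * (1 - g₁ z * conj (g₂ z)) := by ring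
    have key := keyalg0 (g₁ z) (g₂ z) (conj (g₁ z)) (conj (g₂ z))
      (wz g₁ z) (wz g₂ z) (wzb g₁ z) (wzb g₂ z)
      (conj (wzb g₁ z)) (conj (wzb g₂ z))
      (wz (wzb g₁) z) (wz (wzb g₂) z)
      (1 - g₁ z * conj (g₂ z)) (1 - conj (g₁ z) * g₂ z)
      (1 + g₁ z * conj (g₁ z)) (1 + g₂ z * conj (g₂ z))
      hB hBb hC hD hrel hcpz hcp'
      (by linear_combination hH)
    simp only [Ge1, Ge2, ← Complex.mul_conj]
    exact key
  exact ⟨fun h z hz => (main z hz).mp (h z hz), fun h z hz => (main z hz).mpr (h z hz)⟩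
end

section
/- Let g₁, g₂ : Ω → 𝔻 be nowhere-holomorphic C² functions on an open set Ω ⊆ ℂ satisfying the compatibility condition (CP) and the integrability condition (Ge1), and set f := −2i·conj(F). Then on Ω: (f·g₁)_z̄ = −(i/2)|f|²·(1 − 2 g₁·conj(g₂) + |g₁|²|g₂|²), (f·g₂)_z̄ = −(i/2)|f|²·(1 − 2 conj(g₁)·g₂ + |g₁|²|g₂|²), and (f·g₁·g₂)_z̄ = −(i/2)|f|²·[g₁(1 − |g₂|²) + g₂(1 − |g₁|²)]. -/
open Complex ComplexConjugate

/-- The function `f := −2i·conj(F)`. -/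
noncomputable def ffun (g₁ g₂ : ℂ → ℂ) (z : ℂ) : ℂ :=
  -2 * Complex.I * conj (Ffun g₁ g₂ z)

lemma wz_mul {h k : ℂ → ℂ} {z : ℂ} (hh : DifferentiableAt ℝ h z) (hk : DifferentiableAt ℝ k z) :
    wz (fun w => h w * k w) z = wz h z * k z + h z * wz k z := by
  unfold wz
  rw [fderiv_fun_mul hh hk]
  simp only [ContinuousLinearMap.add_apply, ContinuousLinearMap.smul_apply, smul_eq_mul]
  ring

lemma wzb_mul {h k : ℂ → ℂ} {z : ℂ} (hh : DifferentiableAt ℝ h z) (hk : DifferentiableAt ℝ k z) :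
    wzb (fun w => h w * k w) z = wzb h z * k z + h z * wzb k z := by
  unfold wzb
  rw [fderiv_fun_mul hh hk]
  simp only [ContinuousLinearMap.add_apply, ContinuousLinearMap.smul_apply, smul_eq_mul]
  ring

lemma fderiv_conj_apply {h : ℂ → ℂ} {z : ℂ} (hh : DifferentiableAt ℝ h z) (v : ℂ) :
    fderiv ℝ (fun w => conj (h w)) z v = conj (fderiv ℝ h z v) := by
  have e : (fun w => conj (h w)) = (conjCLE : ℂ → ℂ) ∘ h := rfl
  rw [e, fderiv_comp z conjCLE.differentiableAt hh]
  rw [ContinuousLinearEquiv.fderiv]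
  simp

lemma wz_conj {h : ℂ → ℂ} {z : ℂ} (hh : DifferentiableAt ℝ h z) :
    wz (fun w => conj (h w)) z = conj (wzb h z) := by
  unfold wz wzb
  rw [fderiv_conj_apply hh, fderiv_conj_apply hh]
  apply Complex.ext <;> simp <;> ring

lemma wzb_conj {h : ℂ → ℂ} {z : ℂ} (hh : DifferentiableAt ℝ h z) :
    wzb (fun w => conj (h w)) z = conj (wz h z) := by
  unfold wz wzb
  rw [fderiv_conj_apply hh, fderiv_conj_apply hh]
  apply Complex.ext <;> simp <;> ring

lemma fderiv_inv_apply {h : ℂ → ℂ} {z : ℂ} (hh : DifferentiableAt ℝ h z) (hz : h z ≠ 0) (v : ℂ) :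
    fderiv ℝ (fun w => (h w)⁻¹) z v = -((h z)⁻¹ * fderiv ℝ h z v * (h z)⁻¹) := by
  have e : (fun w => (h w)⁻¹) = Inv.inv ∘ h := rfl
  rw [e, fderiv_comp z (differentiableAt_inv hz) hh, fderiv_inv' hz]
  simp [ContinuousLinearMap.mulLeftRight_apply]

lemma wz_inv {h : ℂ → ℂ} {z : ℂ} (hh : DifferentiableAt ℝ h z) (hz : h z ≠ 0) :
    wz (fun w => (h w)⁻¹) z = -(wz h z) / (h z) ^ 2 := by
  unfold wz
  rw [fderiv_inv_apply hh hz, fderiv_inv_apply hh hz]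
  field_simp
  ring

lemma wzb_inv {h : ℂ → ℂ} {z : ℂ} (hh : DifferentiableAt ℝ h z) (hz : h z ≠ 0) :
    wzb (fun w => (h w)⁻¹) z = -(wzb h z) / (h z) ^ 2 := by
  unfold wzb
  rw [fderiv_inv_apply hh hz, fderiv_inv_apply hh hz]
  field_simp
  ring

lemma wz_sub {h k : ℂ → ℂ} {z : ℂ} (hh : DifferentiableAt ℝ h z) (hk : DifferentiableAt ℝ k z) :
    wz (fun w => h w - k w) z = wz h z - wz k z := by
  unfold wz; rw [fderiv_fun_sub hh hk]; simp; ring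

lemma wzb_sub {h k : ℂ → ℂ} {z : ℂ} (hh : DifferentiableAt ℝ h z) (hk : DifferentiableAt ℝ k z) :
    wzb (fun w => h w - k w) z = wzb h z - wzb k z := by
  unfold wzb; rw [fderiv_fun_sub hh hk]; simp; ring

lemma wz_add {h k : ℂ → ℂ} {z : ℂ} (hh : DifferentiableAt ℝ h z) (hk : DifferentiableAt ℝ k z) :
    wz (fun w => h w + k w) z = wz h z + wz k z := by
  unfold wz; rw [fderiv_fun_add hh hk]; simp; ring

lemma wzb_add {h k : ℂ → ℂ} {z : ℂ} (hh : DifferentiableAt ℝ h z) (hk : DifferentiableAt ℝ k z) :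
    wzb (fun w => h w + k w) z = wzb h z + wzb k z := by
  unfold wzb; rw [fderiv_fun_add hh hk]; simp; ring

lemma wz_const (c z : ℂ) : wz (fun _ => c) z = 0 := by
  unfold wz; simp

lemma wzb_const (c z : ℂ) : wzb (fun _ => c) z = 0 := by
  unfold wzb; simp

lemma wz_const_mul {h : ℂ → ℂ} {z : ℂ} (c : ℂ) (hh : DifferentiableAt ℝ h z) :
    wz (fun w => c * h w) z = c * wz h z := by
  rw [wz_mul (differentiableAt_const c) hh, wz_const]; ring

lemma wzb_const_mul {h : ℂ → ℂ} {z : ℂ} (c : ℂ) (hh : DifferentiableAt ℝ h z) :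
    wzb (fun w => c * h w) z = c * wzb h z := by
  rw [wzb_mul (differentiableAt_const c) hh, wzb_const]; ring

/-- `h` is real-differentiable at `z` with Wirtinger derivatives `a = ∂h/∂z`, `b = ∂h/∂z̄`. -/
def HW (h : ℂ → ℂ) (a b z : ℂ) : Prop :=
  DifferentiableAt ℝ h z ∧ wz h z = a ∧ wzb h z = b

lemma HW.congr {h k : ℂ → ℂ} {a b z : ℂ} (hw : HW h a b z) (e : ∀ w, h w = k w) :
    HW k a b z := by
  have : h = k := funext e
  rw [← this]; exact hw

lemma HW.const (c z : ℂ) : HW (fun _ => c) 0 0 z :=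
  ⟨differentiableAt_const c, wz_const c z, wzb_const c z⟩

lemma HW.mul {h k : ℂ → ℂ} {a b c d z : ℂ} (h1 : HW h a b z) (h2 : HW k c d z) :
    HW (fun w => h w * k w) (a * k z + h z * c) (b * k z + h z * d) z :=
  ⟨h1.1.mul h2.1, by rw [wz_mul h1.1 h2.1, h1.2.1, h2.2.1],
    by rw [wzb_mul h1.1 h2.1, h1.2.2, h2.2.2]⟩

lemma HW.sub {h k : ℂ → ℂ} {a b c d z : ℂ} (h1 : HW h a b z) (h2 : HW k c d z) :
    HW (fun w => h w - k w) (a - c) (b - d) z :=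
  ⟨h1.1.sub h2.1, by rw [wz_sub h1.1 h2.1, h1.2.1, h2.2.1],
    by rw [wzb_sub h1.1 h2.1, h1.2.2, h2.2.2]⟩

lemma HW.add {h k : ℂ → ℂ} {a b c d z : ℂ} (h1 : HW h a b z) (h2 : HW k c d z) :
    HW (fun w => h w + k w) (a + c) (b + d) z :=
  ⟨h1.1.add h2.1, by rw [wz_add h1.1 h2.1, h1.2.1, h2.2.1],
    by rw [wzb_add h1.1 h2.1, h1.2.2, h2.2.2]⟩

lemma HW.conj {h : ℂ → ℂ} {a b z : ℂ} (h1 : HW h a b z) :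
    HW (fun w => conj (h w)) (conj b) (conj a) z :=
  ⟨(Complex.conjCLE.differentiableAt).comp z h1.1,
    by rw [wz_conj h1.1, h1.2.2], by rw [wzb_conj h1.1, h1.2.1]⟩

lemma HW.inv {h : ℂ → ℂ} {a b z : ℂ} (h1 : HW h a b z) (hz : h z ≠ 0) :
    HW (fun w => (h w)⁻¹) (-a / (h z) ^ 2) (-b / (h z) ^ 2) z :=
  ⟨h1.1.inv hz, by rw [wz_inv h1.1 hz, h1.2.1], by rw [wzb_inv h1.1 hz, h1.2.2]⟩

lemma diffAt_wzb {g : ℂ → ℂ} {Ω : Set ℂ} (hΩ : IsOpen Ω) (hg : ContDiffOn ℝ 2 g Ω)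
    {z : ℂ} (hz : z ∈ Ω) : DifferentiableAt ℝ (wzb g) z := by
  have h1 : ContDiffOn ℝ 1 (fderiv ℝ g) Ω := hg.fderiv_of_isOpen hΩ (by norm_num)
  have hv : ∀ v : ℂ, DifferentiableAt ℝ (fun w => fderiv ℝ g w v) z := by
    intro v
    have h2 : ContDiffOn ℝ 1 (fun w => fderiv ℝ g w v) Ω :=
      (ContinuousLinearMap.apply ℝ ℂ v).contDiff.comp_contDiffOn h1
    exact (h2.differentiableOn one_ne_zero).differentiableAt (hΩ.mem_nhds hz)
  have e : wzb g = fun w => (1/2 : ℂ) * (fderiv ℝ g w 1 + Complex.I * fderiv ℝ g w Complex.I) :=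
    rfl
  rw [e]
  exact (differentiableAt_const _).mul ((hv 1).add ((differentiableAt_const _).mul (hv Complex.I)))

lemma keyM (A A' B B' P Q Q' G G' M : ℂ)
    (hd1 : 1 - A*B' ≠ 0) (he1 : 1 + A*A' ≠ 0) (hd2 : 1 - A'*B ≠ 0)
    (hm : M = -((B'/(1-A*B') - A'/(1+A*A'))*P*Q) - (A+B)/((1-A'*B)*(1+A*A'))*(Q*Q'))
    (hq : Q = G*((1-A*B')*(1+A*A')))
    (hq' : Q' = G'*((1-A'*B)*(1+A'*A))) :
    M = -((B'*(1+A*A') - A'*(1-A*B'))*P*G)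
        - (A+B)*(G*G'*((1-A*B')*(1+A'*A))) := by
  have hd1' : 1 - B'*A ≠ 0 := by rw [mul_comm]; exact hd1
  have he1' : 1 + A'*A ≠ 0 := by rw [mul_comm]; exact he1
  have hd2' : 1 - B*A' ≠ 0 := by rw [mul_comm]; exact hd2
  subst hm hq hq'
  field_simp

lemma keyF (A A' B B' P Q Q' R' M G G' : ℂ)
    (hd1 : 1 - A*B' ≠ 0) (he1 : 1 + A*A' ≠ 0)
    (hm : M = -((B'*(1+A*A') - A'*(1-A*B'))*P*G)
        - (A+B)*(G*G'*((1-A*B')*(1+A'*A))))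
    (hq : Q = G*((1-A*B')*(1+A*A')))
    (hq' : Q' = G'*((1-A'*B)*(1+A'*A)))
    (hr' : R' = G'*((1-A*B')*(1+B'*B))) :
    M * ((1-A*B')*(1+A*A'))⁻¹
      + Q * (-((0-(P*B' + A*R'))*(1+A*A') + (1-A*B')*(0+(P*A' + A*Q')))
          / ((1-A*B')*(1+A*A'))^2)
      = G*G'*(A*B*(A'+B') - (A+B)) := by
  have hd1' : 1 - B'*A ≠ 0 := by rw [mul_comm]; exact hd1
  have he1' : 1 + A'*A ≠ 0 := by rw [mul_comm]; exact he1
  subst hm hq hq' hr'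
  field_simp
  ring

set_option maxHeartbeats 1000000 in
/-- **(Step B, identities (Tq2a), (Tq2b), (Tq3)).** Under (CP) and (Ge1):
`(f·g₁)_z̄ = −(i/2)|f|²(1 − 2g₁·conj(g₂) + |g₁|²|g₂|²)`,
`(f·g₂)_z̄ = −(i/2)|f|²(1 − 2conj(g₁)·g₂ + |g₁|²|g₂|²)`, and
`(f·g₁·g₂)_z̄ = −(i/2)|f|²[g₁(1 − |g₂|²) + g₂(1 − |g₁|²)]`. -/
theorem fg_zbar_identities
    (Ω : Set ℂ) (hΩ : IsOpen Ω) (g₁ g₂ : ℂ → ℂ)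
    (hg₁ : ContDiffOn ℝ 2 g₁ Ω) (hg₂ : ContDiffOn ℝ 2 g₂ Ω)
    (hd₁ : ∀ z ∈ Ω, ‖g₁ z‖ < 1) (hd₂ : ∀ z ∈ Ω, ‖g₂ z‖ < 1)
    (hnh₁ : ∀ z ∈ Ω, wzb g₁ z ≠ 0) (hnh₂ : ∀ z ∈ Ω, wzb g₂ z ≠ 0)
    (hCP : ∀ z ∈ Ω, CP g₁ g₂ z)
    (hGe1 : ∀ z ∈ Ω, Ge1 g₁ g₂ z) :
    ∀ z ∈ Ω,
      (wzb (fun w => ffun g₁ g₂ w * g₁ w) z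
        = -(Complex.I / 2) * (Complex.normSq (ffun g₁ g₂ z) : ℂ)
            * (1 - 2 * g₁ z * conj (g₂ z)
              + (Complex.normSq (g₁ z) : ℂ) * (Complex.normSq (g₂ z) : ℂ)))
      ∧ (wzb (fun w => ffun g₁ g₂ w * g₂ w) z
        = -(Complex.I / 2) * (Complex.normSq (ffun g₁ g₂ z) : ℂ)
            * (1 - 2 * conj (g₁ z) * g₂ z
              + (Complex.normSq (g₁ z) : ℂ) * (Complex.normSq (g₂ z) : ℂ)))
      ∧ (wzb (fun w => ffun g₁ g₂ w * g₁ w * g₂ w) z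
        = -(Complex.I / 2) * (Complex.normSq (ffun g₁ g₂ z) : ℂ)
            * (g₁ z * (1 - (Complex.normSq (g₂ z) : ℂ))
              + g₂ z * (1 - (Complex.normSq (g₁ z) : ℂ)))) := by
  intro z hz
  -- basic differentiability
  have hg1d : DifferentiableAt ℝ g₁ z :=
    (hg₁.differentiableOn two_ne_zero).differentiableAt (hΩ.mem_nhds hz)
  have hg2d : DifferentiableAt ℝ g₂ z :=
    (hg₂.differentiableOn two_ne_zero).differentiableAt (hΩ.mem_nhds hz)
  have hW1 : HW g₁ (wz g₁ z) (wzb g₁ z) z := ⟨hg1d, rfl, rfl⟩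
  have hW2 : HW g₂ (wz g₂ z) (wzb g₂ z) z := ⟨hg2d, rfl, rfl⟩
  have hWq : HW (wzb g₁) (wz (wzb g₁) z) (wzb (wzb g₁) z) z :=
    ⟨diffAt_wzb hΩ hg₁ hz, rfl, rfl⟩
  -- nonvanishing denominators
  have hd1 : (1 : ℂ) - g₁ z * conj (g₂ z) ≠ 0 := by
    intro h
    have h1 : g₁ z * conj (g₂ z) = 1 := by linear_combination -h
    have h2 := congrArg norm h1
    rw [norm_mul, Complex.norm_conj, norm_one] at h2
    nlinarith [hd₁ z hz, hd₂ z hz, norm_nonneg (g₁ z), norm_nonneg (g₂ z)]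
  have hd2 : (1 : ℂ) - conj (g₁ z) * g₂ z ≠ 0 := by
    intro h
    have h1 : conj (g₁ z) * g₂ z = 1 := by linear_combination -h
    have h2 := congrArg norm h1
    rw [norm_mul, Complex.norm_conj, norm_one] at h2
    nlinarith [hd₁ z hz, hd₂ z hz, norm_nonneg (g₁ z), norm_nonneg (g₂ z)]
  have he1 : (1 : ℂ) + g₁ z * conj (g₁ z) ≠ 0 := by
    rw [Complex.mul_conj]
    intro h
    have : ((1 + Complex.normSq (g₁ z) : ℝ) : ℂ) = 0 := by push_cast; linear_combination h
    rw [Complex.ofReal_eq_zero] at this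
    nlinarith [Complex.normSq_nonneg (g₁ z)]
  have he1' : (1 : ℂ) + conj (g₁ z) * g₁ z ≠ 0 := by rw [mul_comm]; exact he1
  have he2 : (1 : ℂ) + g₂ z * conj (g₂ z) ≠ 0 := by
    rw [Complex.mul_conj]
    intro h
    have : ((1 + Complex.normSq (g₂ z) : ℝ) : ℂ) = 0 := by push_cast; linear_combination h
    rw [Complex.ofReal_eq_zero] at this
    nlinarith [Complex.normSq_nonneg (g₂ z)]
  have he2' : (1 : ℂ) + conj (g₂ z) * g₂ z ≠ 0 := by rw [mul_comm]; exact he2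
  have hDne : ((1 : ℂ) - g₁ z * conj (g₂ z)) * (1 + g₁ z * conj (g₁ z)) ≠ 0 :=
    mul_ne_zero hd1 he1
  -- HW structure for F and f
  have hWD := ((HW.const 1 z).sub (hW1.mul hW2.conj)).mul
    ((HW.const 1 z).add (hW1.mul hW1.conj))
  have hWF := (hWq.mul (hWD.inv hDne)).congr (k := Ffun g₁ g₂)
    (fun w => by simp only [Ffun]; rw [← Complex.mul_conj, div_eq_mul_inv])
  have hWF' : HW (Ffun g₁ g₂) (wz (Ffun g₁ g₂) z) (wzb (Ffun g₁ g₂) z) z :=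
    ⟨hWF.1, rfl, rfl⟩
  have hWf := ((HW.const (-2 * Complex.I) z).mul hWF'.conj).congr (k := ffun g₁ g₂)
    (fun w => by simp only [ffun])
  -- the hypotheses (Ge1) and (CP) in usable form
  have hm0 : (0:ℂ) = wz (wzb g₁) z
      + (conj (g₂ z) / (1 - g₁ z * conj (g₂ z))
          - conj (g₁ z) / (1 + (Complex.normSq (g₁ z) : ℂ))) * wz g₁ z * wzb g₁ z
      + ((g₁ z + g₂ z) / ((1 - conj (g₁ z) * g₂ z) * (1 + (Complex.normSq (g₁ z) : ℂ))))
          * (Complex.normSq (wzb g₁ z) : ℂ) := hGe1 z hz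
  simp only [← Complex.mul_conj] at hm0
  have hm : wz (wzb g₁) z =
      -((conj (g₂ z) / (1 - g₁ z * conj (g₂ z))
          - conj (g₁ z) / (1 + g₁ z * conj (g₁ z))) * wz g₁ z * wzb g₁ z)
      - (g₁ z + g₂ z) / ((1 - conj (g₁ z) * g₂ z) * (1 + g₁ z * conj (g₁ z)))
          * (wzb g₁ z * conj (wzb g₁ z)) := by linear_combination -hm0
  have hcp0 : Ffun g₁ g₂ z
      = wzb g₂ z / ((1 - conj (g₁ z) * g₂ z) * (1 + (Complex.normSq (g₂ z) : ℂ))) := hCP z hz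
  simp only [← Complex.mul_conj] at hcp0
  have hr : wzb g₂ z = Ffun g₁ g₂ z * ((1 - conj (g₁ z) * g₂ z) * (1 + g₂ z * conj (g₂ z))) := by
    rw [hcp0, div_mul_cancel₀ _ (mul_ne_zero hd2 he2)]
  have hFz : Ffun g₁ g₂ z
      = wzb g₁ z / ((1 - g₁ z * conj (g₂ z)) * (1 + g₁ z * conj (g₁ z))) := by
    simp only [Ffun, ← Complex.mul_conj]
  have hq : wzb g₁ z
      = Ffun g₁ g₂ z * ((1 - g₁ z * conj (g₂ z)) * (1 + g₁ z * conj (g₁ z))) := by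
    rw [hFz, div_mul_cancel₀ _ hDne]
  have hFc : conj (Ffun g₁ g₂ z)
      = conj (wzb g₁ z) / ((1 - conj (g₁ z) * g₂ z) * (1 + conj (g₁ z) * g₁ z)) := by
    rw [hFz]
    simp only [map_div₀, map_mul, map_sub, map_add, map_one, Complex.conj_conj]
  have hrc : conj (wzb g₂ z) = conj (Ffun g₁ g₂ z)
      * ((1 - g₁ z * conj (g₂ z)) * (1 + conj (g₂ z) * g₂ z)) := by
    rw [hr]
    simp only [map_mul, map_sub, map_add, map_one, Complex.conj_conj]
  have hqc : conj (wzb g₁ z)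
      = conj (Ffun g₁ g₂ z) * ((1 - conj (g₁ z) * g₂ z) * (1 + conj (g₁ z) * g₁ z)) := by
    rw [hq]
    simp only [map_mul, map_sub, map_add, map_one, Complex.conj_conj]
  -- the key closed form for `∂F/∂z`
  have hwzF : wz (Ffun g₁ g₂) z = Ffun g₁ g₂ z * conj (Ffun g₁ g₂ z)
      * (g₁ z * g₂ z * (conj (g₁ z) + conj (g₂ z)) - (g₁ z + g₂ z)) := by
    rw [hWF.2.1]
    exact keyF (g₁ z) (conj (g₁ z)) (g₂ z) (conj (g₂ z)) (wz g₁ z) (wzb g₁ z)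
      (conj (wzb g₁ z)) (conj (wzb g₂ z)) (wz (wzb g₁) z)
      (Ffun g₁ g₂ z) (conj (Ffun g₁ g₂ z)) hd1 he1
      (keyM (g₁ z) (conj (g₁ z)) (g₂ z) (conj (g₂ z)) (wz g₁ z) (wzb g₁ z)
        (conj (wzb g₁ z)) (Ffun g₁ g₂ z) (conj (Ffun g₁ g₂ z)) (wz (wzb g₁) z)
        hd1 he1 hd2 hm hq hqc) hq hqc hrc
  have hnf : ((Complex.normSq (ffun g₁ g₂ z) : ℝ) : ℂ)
      = 4 * (Ffun g₁ g₂ z * conj (Ffun g₁ g₂ z)) := by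
    rw [← Complex.mul_conj]
    simp only [ffun, map_mul, map_neg, map_ofNat, Complex.conj_I, Complex.conj_conj]
    linear_combination (-4 * conj (Ffun g₁ g₂ z) * Ffun g₁ g₂ z) * Complex.I_sq
  refine ⟨(hWf.mul hW1).2.2.trans ?_, (hWf.mul hW2).2.2.trans ?_,
    ((hWf.mul hW1).mul hW2).2.2.trans ?_⟩ <;>
  · rw [hnf]
    simp only [← Complex.mul_conj]
    rw [hwzF]
    simp only [ffun]
    simp only [map_mul, map_sub, map_add, map_one, Complex.conj_conj]
    simp only [hq, hr]
    ring
end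

section
/- The real-valued function G : ℂ → 𝔻 defined by G(u + iv) := tanh u satisfies the translator equation (Gauss): G_{zz̄} + 2·(conj(G)|G|²/(1 − |G|⁴))·G_z·G_z̄ + 2·(G/(1 − |G|⁴))·|G_z̄|² = 0 at every point of ℂ, and G_z̄ never vanishes. -/
open Complex ComplexConjugate

/-- The translator equation (Gauss) for `G : Ω → 𝔻`:
`G_{zz̄} + 2(conj(G)|G|²/(1 − |G|⁴))·G_z·G_z̄ + 2(G/(1 − |G|⁴))·|G_z̄|² = 0`. -/
def GaussEq (G : ℂ → ℂ) (z : ℂ) : Prop :=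
  wz (wzb G) z
    + 2 * (conj (G z) * (Complex.normSq (G z) : ℂ)
        / (1 - (Complex.normSq (G z) : ℂ) ^ 2)) * wz G z * wzb G z
    + 2 * (G z / (1 - (Complex.normSq (G z) : ℂ) ^ 2)) * (Complex.normSq (wzb G z) : ℂ) = 0

/-- The null curve `φ = (2·conj(G)_z/(|G|⁴ − 1))·(1 − G², i(1 + G²), 2G)` in `ℂ³`. -/
noncomputable def phi3 (G : ℂ → ℂ) (z : ℂ) : Fin 3 → ℂ :=
  ![(2 * wz (fun w => conj (G w)) z / ((Complex.normSq (G z) : ℂ) ^ 2 - 1)) * (1 - (G z) ^ 2),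
    (2 * wz (fun w => conj (G w)) z / ((Complex.normSq (G z) : ℂ) ^ 2 - 1))
      * (Complex.I * (1 + (G z) ^ 2)),
    (2 * wz (fun w => conj (G w)) z / ((Complex.normSq (G z) : ℂ) ^ 2 - 1)) * (2 * G z)]

lemma tanh_sq_lt_one (x : ℝ) : Real.tanh x ^ 2 < 1 := by
  rw [Real.tanh_eq_sinh_div_cosh, div_pow, div_lt_one (by positivity)]
  nlinarith [Real.cosh_sq_sub_sinh_sq x]

lemma tanh_hasDerivAt (x : ℝ) : HasDerivAt Real.tanh (1 - Real.tanh x ^ 2) x := by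
  have hc : Real.cosh x ≠ 0 := (Real.cosh_pos x).ne'
  have h := (Real.hasDerivAt_sinh x).div (Real.hasDerivAt_cosh x) hc
  have he : (Real.sinh / Real.cosh) = Real.tanh := by
    funext y; rw [Pi.div_apply, Real.tanh_eq_sinh_div_cosh]
  rw [he] at h
  refine h.congr_deriv ?_
  rw [Real.tanh_eq_sinh_div_cosh]
  field_simp

lemma hasFDerivAt_comp_re {x : ℝ → ℝ} {d : ℝ} {z : ℂ} (h : HasDerivAt x d z.re) :
    HasFDerivAt (fun w : ℂ => ((x w.re : ℝ) : ℂ))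
      (d • (Complex.ofRealCLM.comp Complex.reCLM)) z := by
  have h1 : HasFDerivAt (fun w : ℂ => x w.re)
      ((ContinuousLinearMap.smulRight (1 : ℝ →L[ℝ] ℝ) d).comp Complex.reCLM) z :=
    h.hasFDerivAt.comp z Complex.reCLM.hasFDerivAt
  have h2 := Complex.ofRealCLM.hasFDerivAt.comp z h1
  have h3 : HasFDerivAt (fun w : ℂ => ((x w.re : ℝ) : ℂ))
      (Complex.ofRealCLM.comp ((ContinuousLinearMap.smulRight (1 : ℝ →L[ℝ] ℝ) d).comp
        Complex.reCLM)) z := h2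
  convert h3 using 1
  ext w
  simp [mul_comm]

lemma fderiv_comp_re_one {x : ℝ → ℝ} {d : ℝ} {z : ℂ} (h : HasDerivAt x d z.re) :
    fderiv ℝ (fun w : ℂ => ((x w.re : ℝ) : ℂ)) z 1 = (d : ℂ) := by
  rw [(hasFDerivAt_comp_re h).fderiv]; simp

lemma fderiv_comp_re_I {x : ℝ → ℝ} {d : ℝ} {z : ℂ} (h : HasDerivAt x d z.re) :
    fderiv ℝ (fun w : ℂ => ((x w.re : ℝ) : ℂ)) z Complex.I = 0 := by
  rw [(hasFDerivAt_comp_re h).fderiv]; simp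

lemma wz_comp_re {x : ℝ → ℝ} {d : ℝ} {z : ℂ} (h : HasDerivAt x d z.re) :
    wz (fun w : ℂ => ((x w.re : ℝ) : ℂ)) z = (d : ℂ) / 2 := by
  rw [wz, fderiv_comp_re_one h, fderiv_comp_re_I h]; ring

lemma wzb_comp_re {x : ℝ → ℝ} {d : ℝ} {z : ℂ} (h : HasDerivAt x d z.re) :
    wzb (fun w : ℂ => ((x w.re : ℝ) : ℂ)) z = (d : ℂ) / 2 := by
  rw [wzb, fderiv_comp_re_one h, fderiv_comp_re_I h]; ring

lemma wzb_tanh (z : ℂ) : wzb (fun w => ((Real.tanh w.re : ℝ) : ℂ)) z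
    = (((1 - Real.tanh z.re ^ 2) / 2 : ℝ) : ℂ) := by
  rw [wzb_comp_re (tanh_hasDerivAt z.re)]; push_cast; ring


/-- **(Grim reaper cylinder data).** The function `G(u + iv) = tanh u` maps `ℂ` into the
open unit disc, satisfies the translator equation (Gauss) everywhere, and is nowhere
holomorphic (`G_z̄` never vanishes). -/
theorem tanh_solves_gauss :
    (∀ z : ℂ, ‖((Real.tanh z.re : ℝ) : ℂ)‖ < 1)
    ∧ (∀ z : ℂ, GaussEq (fun w => ((Real.tanh w.re : ℝ) : ℂ)) z)
    ∧ (∀ z : ℂ, wzb (fun w => ((Real.tanh w.re : ℝ) : ℂ)) z ≠ 0) := by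
  have habs : ∀ z : ℂ, ‖((Real.tanh z.re : ℝ) : ℂ)‖ < 1 := by
    intro z
    rw [Complex.norm_real, Real.norm_eq_abs]
    nlinarith [tanh_sq_lt_one z.re, abs_nonneg (Real.tanh z.re), _root_.sq_abs (Real.tanh z.re)]
  refine ⟨habs, ?_, ?_⟩
  · intro z
    have hy : ∀ u : ℝ, HasDerivAt (fun u : ℝ => (1 - Real.tanh u ^ 2) / 2)
        (-(Real.tanh u) * (1 - Real.tanh u ^ 2)) u := by
      intro u
      have := (((tanh_hasDerivAt u).pow 2).const_sub 1).div_const 2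
      refine this.congr_deriv ?_
      push_cast; ring
    have hwzb : wzb (fun w : ℂ => ((Real.tanh w.re : ℝ) : ℂ))
        = fun w : ℂ => ((((1 - Real.tanh w.re ^ 2) / 2 : ℝ)) : ℂ) := by
      funext w; exact wzb_tanh w
    unfold GaussEq
    rw [hwzb, wz_comp_re (hy z.re), wz_comp_re (tanh_hasDerivAt z.re)]
    beta_reduce
    set t := Real.tanh z.re with ht
    have h1 : ((1:ℂ) - ((Complex.normSq ((t:ℝ):ℂ) : ℝ) : ℂ) ^ 2) ≠ 0 := by
      rw [Complex.normSq_ofReal]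
      have hr : (1:ℝ) - (t * t) ^ 2 ≠ 0 := by nlinarith [tanh_sq_lt_one z.re]
      exact_mod_cast hr
    simp only [Complex.normSq_ofReal, Complex.conj_ofReal] at *
    push_cast at h1 ⊢
    have h1' : (1:ℂ) - (t:ℂ) ^ 4 ≠ 0 := by
      rwa [show ((t:ℂ) * t) ^ 2 = (t:ℂ) ^ 4 by ring] at h1
    field_simp
    ring
  · intro z
    rw [wzb_tanh z]
    have : (1 - Real.tanh z.re ^ 2) / 2 ≠ 0 := by nlinarith [tanh_sq_lt_one z.re]
    exact_mod_cast this
end
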